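/- Let A_{ij}(z), i,j ∈ {1,…,N}, be power series with nonnegative coefficients such that A_{ij}(1) = P_{ij} where P is a stochastic matrix with P_{ii} < 1 for all i. Define M(z) = z·I - A(z)^entrywise, i.e., M(z)_{ii} = z - A_{ii}(z), M(z)_{ij} = -A_{ij}(z) for i ≠ j. Then for every z with |z| = 1 and z ≠ 1, the matrix M(z) is strictly diagonally dominant by rows, hence det M(z) ≠ 0. -/
import Mathlib


open Finset

/-- Let `A i j` be joint probability generating functions (power series with nonnegative
coefficients) with `A i j 1 = P i j`, `P` stochastic with `P i i < 1`, and with the strict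
modulus decrease `‖A i j z‖ < P i j` for `‖z‖ = 1`, `z ≠ 1`, whenever `P i j > 0`.
Then `M(z) = z·I - A(z)` is strictly diagonally dominant by rows for every `z` on the
unit circle with `z ≠ 1`, and hence `det M(z) ≠ 0` there. -/
theorem stmt_7 {N : ℕ} (p : Fin N → Fin N → ℕ → ℝ) (P : Matrix (Fin N) (Fin N) ℝ)
    (hp : ∀ i j k, 0 ≤ p i j k)
    (hPsum : ∀ i j, HasSum (p i j) (P i j))
    (hstoch : ∀ i, ∑ j, P i j = 1)
    (hdiag : ∀ i, P i i < 1)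
    (A : Fin N → Fin N → ℂ → ℂ)
    (hAval : ∀ i j, ∀ z : ℂ, ‖z‖ ≤ 1 → A i j z = ∑' k, (p i j k : ℂ) * z ^ k)
    (hstrict : ∀ i j, ∀ z : ℂ, ‖z‖ = 1 → z ≠ 1 → 0 < P i j → ‖A i j z‖ < P i j)
    (M : ℂ → Matrix (Fin N) (Fin N) ℂ)
    (hM : ∀ z i j, M z i j = if i = j then z - A i i z else -(A i j z)) :
    ∀ z : ℂ, ‖z‖ = 1 → z ≠ 1 →
      (∀ i, ∑ j ∈ Finset.univ.erase i, ‖M z i j‖ < ‖M z i i‖) ∧ (M z).det ≠ 0 := by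
  intro z hz hz1
  have hbound : ∀ i j, ‖A i j z‖ ≤ P i j := by
    intro i j
    have hnorm : (fun k => ‖(p i j k : ℂ) * z ^ k‖) = p i j := by
      funext k
      rw [norm_mul, norm_pow, hz, one_pow, mul_one, Complex.norm_real,
        Real.norm_of_nonneg (hp i j k)]
    have hsum : Summable (fun k => ‖(p i j k : ℂ) * z ^ k‖) := by
      rw [hnorm]; exact (hPsum i j).summable
    rw [hAval i j z hz.le]
    calc ‖∑' k, (p i j k : ℂ) * z ^ k‖ ≤ ∑' k, ‖(p i j k : ℂ) * z ^ k‖ :=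
          norm_tsum_le_tsum_norm hsum
      _ = P i j := by rw [hnorm]; exact (hPsum i j).tsum_eq
  have hDD : ∀ i, ∑ j ∈ Finset.univ.erase i, ‖M z i j‖ < ‖M z i i‖ := by
    intro i
    obtain ⟨j0, hj0⟩ : ∃ j, 0 < P i j := by
      by_contra h
      push_neg at h
      have : ∑ j, P i j ≤ 0 := Finset.sum_nonpos fun j _ => h j
      linarith [hstoch i]
    have hlt : ∑ j, ‖A i j z‖ < ∑ j, P i j :=
      Finset.sum_lt_sum (fun j _ => hbound i j)
        ⟨j0, Finset.mem_univ j0, hstrict i j0 z hz hz1 hj0⟩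
    rw [hstoch i] at hlt
    have hii : ‖A i i z‖ + ∑ j ∈ Finset.univ.erase i, ‖A i j z‖ = ∑ j, ‖A i j z‖ :=
      Finset.add_sum_erase _ (fun j => ‖A i j z‖) (Finset.mem_univ i)
    calc ∑ j ∈ Finset.univ.erase i, ‖M z i j‖
        = ∑ j ∈ Finset.univ.erase i, ‖A i j z‖ := by
          apply Finset.sum_congr rfl
          intro j hj
          rw [hM, if_neg (Ne.symm (Finset.ne_of_mem_erase hj)), norm_neg]
      _ < 1 - ‖A i i z‖ := by linarith
      _ ≤ ‖z - A i i z‖ := by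
          have := norm_sub_norm_le z (A i i z)
          rw [hz] at this; linarith
      _ = ‖M z i i‖ := by rw [hM, if_pos rfl]
  exact ⟨hDD, det_ne_zero_of_sum_row_lt_diag hDD⟩
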